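/- Let B be the color-set gadget for integers r ≥ 2, 1 ≤ m ≤ r, a proper subset C ⊊ {1,…,r} with |C| ≤ m, and ℓ = r − |C|. Let S ⊆ U ∪ {v}, let c : U ∖ S → {1,…,r} be injective, and, in case v ∉ S, let c_v ∈ {1,…,r} be arbitrary; assume that v ∉ S or that all values of c lie in C. Then there exists an r-deletion set Y of B with Y ∩ (U ∪ {v}) = S, Y ∩ F = ∅ and |Y ∖ (U ∪ F)| = ℓ + 1, together with a proper r-coloring φ of B − Y satisfying φ(f_s) = s for all s ∈ {1,…,r}, φ(u) = c(u) for all u ∈ U ∖ S, and, in case v ∉ S, φ(v) = c_v. -/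

import Mathlib

/-- Vertex set of the color-set gadget: `U` (a set of `m ≤ r` true twins), the head vertex
`v`, vertices `w_1, …, w_{2ℓ+1}` (0-indexed: `w i` is `w_{i+1}`), the central clique
`F = {f_1, …, f_r}` (0-indexed), a set `D_0` of `r - 1` vertices, and for each `i ∈ [ℓ]`
a set `D_i` of `r - 1` vertices. -/
inductive BV (r m l : ℕ) : Type where
  | u (i : Fin m)
  | v
  | w (i : Fin (2 * l + 1))
  | f (s : Fin r)
  | d0 (i : Fin (r - 1))
  | d (i : Fin l) (j : Fin (r - 1))

/-- The edges of the color-set gadget (as a relation, to be symmetrized), where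
`cbar : Fin ℓ → Fin r` enumerates `[r] ∖ C` (so `cbar i` is `c̄_{i+1}`); 0-indexed:
`w_{2i-1}` is `w (2*i0)` and `w_{2i}` is `w (2*i0+1)` for `i0 = i - 1`, and `w_{2ℓ+1}`
is `w (2*l)`; `f_1` is `f s` with `s.val = 0`. -/
def BRel (r m l : ℕ) (cbar : Fin l → Fin r) : BV r m l → BV r m l → Prop
  | .u _, .u _ => True
  | .f _, .f _ => True
  | .w i, .u _ => (i : ℕ) % 2 = 0 ∧ (i : ℕ) < 2 * l
  | .w i, .w j =>
      ((i : ℕ) % 2 = 0 ∧ (i : ℕ) < 2 * l ∧ (j : ℕ) = (i : ℕ) + 1) ∨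
      ((i : ℕ) % 2 = 1 ∧ (j : ℕ) = 2 * l)
  | .w i, .d i0 _ => (i : ℕ) = 2 * (i0 : ℕ) ∨ (i : ℕ) = 2 * (i0 : ℕ) + 1
  | .d i0 j, .d i0' j' => i0 = i0' ∧ j ≠ j'
  | .w i, .f s =>
      (∃ i0 : Fin l, (i : ℕ) = 2 * (i0 : ℕ) ∧ s ≠ cbar i0) ∨
      (((i : ℕ) % 2 = 1 ∨ (i : ℕ) = 2 * l) ∧ (s : ℕ) ≠ 0)
  | .w i, .v => (i : ℕ) = 2 * l
  | .w i, .d0 _ => (i : ℕ) = 2 * l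
  | .v, .d0 _ => True
  | .d0 j, .d0 j' => j ≠ j'
  | _, _ => False

/-- The color-set gadget `B = B_C(U, v)`. -/
def colorSetGadget (r m l : ℕ) (cbar : Fin l → Fin r) : SimpleGraph (BV r m l) :=
  SimpleGraph.fromRel (BRel r m l cbar)

/-- For the color-set gadget `B` (with `r ≥ 2`, `1 ≤ m ≤ r`, `C ⊊ [r]`,
`|C| ≤ m`, `ℓ = r − |C|`): given `S ⊆ U ∪ {v}`, an injective coloring prescription `c`
on `U ∖ S`, and (if `v ∉ S`) a color `c_v`, such that `v ∉ S` or all values of `c` lie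
in `C`, there exists an `r`-deletion set `Y` of `B` with `Y ∩ (U ∪ {v}) = S`, `Y ∩ F = ∅`
and `|Y ∖ (U ∪ F)| = ℓ + 1`, together with a proper `r`-coloring `φ` of `B − Y` with
`φ(f_s) = s` for all `s`, `φ(u) = c(u)` on `U ∖ S`, and `φ(v) = c_v` if `v ∉ S`. -/
def bvEmb (r m l : ℕ) : BV r m l → (Fin m ⊕ Unit ⊕ Fin (2*l+1) ⊕ Fin r ⊕ Fin (r-1) ⊕ Fin l × Fin (r-1))
  | .u i => Sum.inl i
  | .v => Sum.inr (Sum.inl ())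
  | .w k => Sum.inr (Sum.inr (Sum.inl k))
  | .f s => Sum.inr (Sum.inr (Sum.inr (Sum.inl s)))
  | .d0 j => Sum.inr (Sum.inr (Sum.inr (Sum.inr (Sum.inl j))))
  | .d i j => Sum.inr (Sum.inr (Sum.inr (Sum.inr (Sum.inr (i, j)))))

instance (r m l : ℕ) : Finite (BV r m l) :=
  Finite.of_injective (bvEmb r m l) (by intro x y h; cases x <;> cases y <;> simp_all [bvEmb])

def bvSkip {r : ℕ} (a : Fin r) (j : Fin (r-1)) : Fin r :=
  if (j : ℕ) < (a : ℕ) then ⟨j, by omega⟩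
  else ⟨(j : ℕ) + 1, by omega⟩

lemma bvSkip_ne {r : ℕ} (a : Fin r) (j : Fin (r-1)) : bvSkip a j ≠ a := by
  have hj := j.isLt
  unfold bvSkip
  split <;> · intro h; rw [Fin.ext_iff] at h; simp at h; omega

lemma bvSkip_inj {r : ℕ} (a : Fin r) : Function.Injective (bvSkip a) := by
  intro j j' h
  have hj := j.isLt; have hj' := j'.isLt
  unfold bvSkip at h
  rw [Fin.ext_iff] at h ⊢
  split at h <;> split at h <;> simp at h ⊢ <;> omega

def phiA (r m l : ℕ) (hr0 : 0 < r) (c : Fin m → Fin r) (cbar : Fin l → Fin r) :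
    BV r m l → Fin r
  | .u i => c i
  | .v => ⟨0, hr0⟩
  | .w k => if h : (k:ℕ) % 2 = 0 ∧ (k:ℕ) < 2*l then cbar ⟨(k:ℕ)/2, by omega⟩ else ⟨0, hr0⟩
  | .f s => s
  | .d0 j => ⟨(j:ℕ)+1, by omega⟩
  | .d i0 j => bvSkip (cbar i0) j

def phiB (r m l : ℕ) (hr0 : 0 < r) (c : Fin m → Fin r) (cv : Fin r) :
    BV r m l → Fin r
  | .u i => c i
  | .v => cv
  | .w _ => ⟨0, hr0⟩
  | .f s => s
  | .d0 j => bvSkip cv j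
  | .d _ j => ⟨(j:ℕ)+1, by omega⟩

lemma keyA (r m l : ℕ) (hr0 : 0 < r) (C : Finset (Fin r))
    (cbar : Fin l → Fin r) (hmem : ∀ i, cbar i ∉ C)
    (S : Set (BV r m l)) (hvS : (BV.v : BV r m l) ∈ S)
    (c : Fin m → Fin r)
    (hc : ∀ i j : Fin m, (BV.u i : BV r m l) ∉ S → (BV.u j : BV r m l) ∉ S → c i = c j → i = j)
    (hcC : ∀ i : Fin m, (BV.u i : BV r m l) ∉ S → c i ∈ C)
    (x y : BV r m l)
    (hx : x ∉ S ∪ {z : BV r m l | ∃ k : Fin (2*l+1), (k:ℕ) % 2 = 1 ∧ z = BV.w k})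
    (hy : y ∉ S ∪ {z : BV r m l | ∃ k : Fin (2*l+1), (k:ℕ) % 2 = 1 ∧ z = BV.w k})
    (hne : x ≠ y) (hrel : BRel r m l cbar x y) :
    phiA r m l hr0 c cbar x ≠ phiA r m l hr0 c cbar y := by
  simp only [Set.mem_union, Set.mem_setOf_eq, not_or, not_exists] at hx hy
  cases x <;> cases y <;> try exact hrel.elim
  case u.u i j =>
    simp only [phiA]
    exact fun h => hne (congrArg BV.u (hc i j hx.1 hy.1 h))
  case f.f s s' =>
    simp only [phiA]
    exact fun h => hne (by rw [h])
  case w.u k j =>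
    have h : (k:ℕ) % 2 = 0 ∧ (k:ℕ) < 2*l := hrel
    simp only [phiA]
    rw [dif_pos h]
    intro heq
    exact hmem _ (by rw [heq]; exact hcC j hy.1)
  case w.w k k' =>
    have h : ((k:ℕ) % 2 = 0 ∧ (k:ℕ) < 2*l ∧ (k':ℕ) = (k:ℕ)+1) ∨
        ((k:ℕ) % 2 = 1 ∧ (k':ℕ) = 2*l) := hrel
    have hwx : ¬((k:ℕ) % 2 = 1 ∧ (BV.w k : BV r m l) = BV.w k) := hx.2 k
    have hwy : ¬((k':ℕ) % 2 = 1 ∧ (BV.w k' : BV r m l) = BV.w k') := hy.2 k'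
    rcases h with ⟨h1, h2, h3⟩ | ⟨h1, h2⟩
    · exact absurd ⟨by omega, rfl⟩ hwy
    · exact absurd ⟨h1, rfl⟩ hwx
  case w.v k =>
    exact absurd hvS hy.1
  case w.f k s =>
    have hwx : ¬((k:ℕ) % 2 = 1 ∧ (BV.w k : BV r m l) = BV.w k) := hx.2 k
    have h : (∃ i0 : Fin l, (k:ℕ) = 2*(i0:ℕ) ∧ s ≠ cbar i0) ∨
        (((k:ℕ) % 2 = 1 ∨ (k:ℕ) = 2*l) ∧ (s:ℕ) ≠ 0) := hrel
    rcases h with ⟨i0, hk, hs⟩ | ⟨h1, hs⟩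
    · have hcond : (k:ℕ) % 2 = 0 ∧ (k:ℕ) < 2*l := ⟨by omega, by omega⟩
      have e : ∀ (h : (k:ℕ)/2 < l), (⟨(k:ℕ)/2, h⟩ : Fin l) = i0 := fun h => Fin.ext (by simp; omega)
      simp only [phiA]
      rw [dif_pos hcond, e]
      exact fun hh => hs hh.symm
    · have hk : (k:ℕ) = 2*l := by
        rcases h1 with h1 | h1
        · exact absurd ⟨h1, rfl⟩ hwx
        · exact h1
      have hcond : ¬((k:ℕ) % 2 = 0 ∧ (k:ℕ) < 2*l) := by omega
      simp only [phiA]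
      rw [dif_neg hcond]
      intro hh
      rw [Fin.ext_iff] at hh
      simp at hh
      omega
  case w.d0 k j =>
    have hk : (k:ℕ) = 2*l := hrel
    have hcond : ¬((k:ℕ) % 2 = 0 ∧ (k:ℕ) < 2*l) := by omega
    simp only [phiA]
    rw [dif_neg hcond]
    intro hh
    rw [Fin.ext_iff] at hh
    simp at hh
  case w.d k i0 j =>
    have hwx : ¬((k:ℕ) % 2 = 1 ∧ (BV.w k : BV r m l) = BV.w k) := hx.2 k
    have h : (k:ℕ) = 2*(i0:ℕ) ∨ (k:ℕ) = 2*(i0:ℕ)+1 := hrel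
    have hk : (k:ℕ) = 2*(i0:ℕ) := by
      rcases h with h | h
      · exact h
      · exact absurd ⟨by omega, rfl⟩ hwx
    have hcond : (k:ℕ) % 2 = 0 ∧ (k:ℕ) < 2*l := ⟨by omega, by omega⟩
    have e : ∀ (h : (k:ℕ)/2 < l), (⟨(k:ℕ)/2, h⟩ : Fin l) = i0 := fun h => Fin.ext (by simp; omega)
    simp only [phiA]
    rw [dif_pos hcond, e]
    exact (bvSkip_ne (cbar i0) j).symm
  case v.d0 j =>
    exact absurd hvS hx.1
  case d0.d0 j j' =>
    have h : j ≠ j' := hrel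
    simp only [phiA]
    intro hh
    rw [Fin.ext_iff] at hh
    simp at hh
    exact h (Fin.ext hh)
  case d.d i0 j i0' j' =>
    have h : i0 = i0' ∧ j ≠ j' := hrel
    obtain ⟨rfl, hjj⟩ := h
    simp only [phiA]
    exact fun hh => hjj (bvSkip_inj _ hh)

lemma keyB (r m l : ℕ) (hr0 : 0 < r)
    (cbar : Fin l → Fin r)
    (S : Set (BV r m l))
    (c : Fin m → Fin r) (cv : Fin r)
    (hc : ∀ i j : Fin m, (BV.u i : BV r m l) ∉ S → (BV.u j : BV r m l) ∉ S → c i = c j → i = j)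
    (x y : BV r m l)
    (hx : x ∉ S ∪ {z : BV r m l | ∃ k : Fin (2*l+1), (k:ℕ) % 2 = 0 ∧ z = BV.w k})
    (hy : y ∉ S ∪ {z : BV r m l | ∃ k : Fin (2*l+1), (k:ℕ) % 2 = 0 ∧ z = BV.w k})
    (hne : x ≠ y) (hrel : BRel r m l cbar x y) :
    phiB r m l hr0 c cv x ≠ phiB r m l hr0 c cv y := by
  simp only [Set.mem_union, Set.mem_setOf_eq, not_or, not_exists] at hx hy
  cases x <;> cases y <;> try exact hrel.elim
  case u.u i j =>
    simp only [phiB]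
    exact fun h => hne (congrArg BV.u (hc i j hx.1 hy.1 h))
  case f.f s s' =>
    simp only [phiB]
    exact fun h => hne (by rw [h])
  case w.u k j =>
    have h : (k:ℕ) % 2 = 0 ∧ (k:ℕ) < 2*l := hrel
    exact absurd ⟨h.1, rfl⟩ (hx.2 k)
  case w.w k k' =>
    have h : ((k:ℕ) % 2 = 0 ∧ (k:ℕ) < 2*l ∧ (k':ℕ) = (k:ℕ)+1) ∨
        ((k:ℕ) % 2 = 1 ∧ (k':ℕ) = 2*l) := hrel
    rcases h with ⟨h1, h2, h3⟩ | ⟨h1, h2⟩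
    · exact absurd ⟨h1, rfl⟩ (hx.2 k)
    · exact absurd ⟨by omega, rfl⟩ (hy.2 k')
  case w.v k =>
    have h : (k:ℕ) = 2*l := hrel
    exact absurd ⟨by omega, rfl⟩ (hx.2 k)
  case w.f k s =>
    have h : (∃ i0 : Fin l, (k:ℕ) = 2*(i0:ℕ) ∧ s ≠ cbar i0) ∨
        (((k:ℕ) % 2 = 1 ∨ (k:ℕ) = 2*l) ∧ (s:ℕ) ≠ 0) := hrel
    rcases h with ⟨i0, hk, hs⟩ | ⟨h1, hs⟩
    · exact absurd ⟨by omega, rfl⟩ (hx.2 k)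
    · simp only [phiB]
      intro hh
      rw [Fin.ext_iff] at hh
      simp at hh
      omega
  case w.d0 k j =>
    have h : (k:ℕ) = 2*l := hrel
    exact absurd ⟨by omega, rfl⟩ (hx.2 k)
  case w.d k i0 j =>
    have h : (k:ℕ) = 2*(i0:ℕ) ∨ (k:ℕ) = 2*(i0:ℕ)+1 := hrel
    have hk : (k:ℕ) = 2*(i0:ℕ)+1 := by
      rcases h with h | h
      · exact absurd ⟨by omega, rfl⟩ (hx.2 k)
      · exact h
    simp only [phiB]
    intro hh
    rw [Fin.ext_iff] at hh
    simp at hh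
  case v.d0 j =>
    simp only [phiB]
    exact (bvSkip_ne cv j).symm
  case d0.d0 j j' =>
    have h : j ≠ j' := hrel
    simp only [phiB]
    exact fun hh => h (bvSkip_inj _ hh)
  case d.d i0 j i0' j' =>
    have h : i0 = i0' ∧ j ≠ j' := hrel
    obtain ⟨rfl, hjj⟩ := h
    simp only [phiB]
    intro hh
    rw [Fin.ext_iff] at hh
    simp at hh
    exact hjj (Fin.ext hh)
theorem stmt_10 (r m : ℕ) (hr : 2 ≤ r) (hm1 : 1 ≤ m) (hmr : m ≤ r)
    (C : Finset (Fin r)) (hC : C ≠ Finset.univ) (hCm : C.card ≤ m)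
    (l : ℕ) (hl : l = r - C.card)
    (cbar : Fin l → Fin r) (hinj : Function.Injective cbar)
    (hmem : ∀ i, cbar i ∉ C)
    (S : Set (BV r m l))
    (hS : S ⊆ Set.range (fun i : Fin m => (BV.u i : BV r m l)) ∪ {BV.v})
    (c : Fin m → Fin r)
    (hc : ∀ i j : Fin m, (BV.u i : BV r m l) ∉ S → (BV.u j : BV r m l) ∉ S →
      c i = c j → i = j)
    (cv : Fin r)
    (hcond : (BV.v : BV r m l) ∉ S ∨ ∀ i : Fin m, (BV.u i : BV r m l) ∉ S → c i ∈ C) :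
    ∃ Y : Set (BV r m l),
      Y ∩ (Set.range (fun i : Fin m => (BV.u i : BV r m l)) ∪ {BV.v}) = S ∧
      (∀ s : Fin r, (BV.f s : BV r m l) ∉ Y) ∧
      (Y \ (Set.range (fun i : Fin m => (BV.u i : BV r m l)) ∪
        Set.range (fun s : Fin r => (BV.f s : BV r m l)))).ncard = l + 1 ∧
      ∃ φ : ((colorSetGadget r m l cbar).induce Yᶜ).Coloring (Fin r),
        (∀ (s : Fin r) (h : (BV.f s : BV r m l) ∈ Yᶜ), φ ⟨BV.f s, h⟩ = s) ∧
        (∀ (i : Fin m) (_ : (BV.u i : BV r m l) ∉ S) (h : (BV.u i : BV r m l) ∈ Yᶜ),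
          φ ⟨BV.u i, h⟩ = c i) ∧
        ((BV.v : BV r m l) ∉ S → ∀ h : (BV.v : BV r m l) ∈ Yᶜ, φ ⟨BV.v, h⟩ = cv) := by
  have hr0 : 0 < r := by omega
  have hSshape : ∀ x ∈ S, (∃ i : Fin m, x = BV.u i) ∨ x = BV.v := by
    intro x hx
    have := hS hx
    simp only [Set.mem_union, Set.mem_range, Set.mem_singleton_iff] at this
    rcases this with ⟨i, hi⟩ | h
    · exact Or.inl ⟨i, hi.symm⟩
    · exact Or.inr h
  have hfS : ∀ s : Fin r, (BV.f s : BV r m l) ∉ S := by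
    intro s hs
    rcases hSshape _ hs with ⟨i, hi⟩ | h <;> simp_all
  have hwS : ∀ k : Fin (2*l+1), (BV.w k : BV r m l) ∉ S := by
    intro k hk
    rcases hSshape _ hk with ⟨i, hi⟩ | h <;> simp_all
  by_cases hv : (BV.v : BV r m l) ∈ S
  · -- delete v (in S) and the odd-indexed w's
    have hcC : ∀ i : Fin m, (BV.u i : BV r m l) ∉ S → c i ∈ C :=
      hcond.resolve_left (not_not.mpr hv)
    refine ⟨S ∪ {z : BV r m l | ∃ k : Fin (2*l+1), (k:ℕ) % 2 = 1 ∧ z = BV.w k},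
      ?_, ?_, ?_, ?_⟩
    · ext x
      simp only [Set.mem_inter_iff, Set.mem_union, Set.mem_setOf_eq, Set.mem_singleton_iff,
        Set.mem_range]
      constructor
      · rintro ⟨hx1 | ⟨k, hk, rfl⟩, hx2⟩
        · exact hx1
        · rcases hx2 with ⟨i, hi⟩ | h <;> simp_all
      · intro hx
        refine ⟨Or.inl hx, ?_⟩
        rcases hSshape _ hx with ⟨i, rfl⟩ | rfl
        · exact Or.inl ⟨i, rfl⟩
        · exact Or.inr rfl
    · intro s hs
      simp only [Set.mem_union, Set.mem_setOf_eq] at hs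
      rcases hs with hs | ⟨k, _, hk⟩
      · exact hfS s hs
      · cases hk
    · have hset : (S ∪ {z : BV r m l | ∃ k : Fin (2*l+1), (k:ℕ) % 2 = 1 ∧ z = BV.w k}) \
          (Set.range (fun i : Fin m => (BV.u i : BV r m l)) ∪
            Set.range (fun s : Fin r => (BV.f s : BV r m l))) =
          insert (BV.v : BV r m l)
            (Set.range (fun i0 : Fin l => (BV.w ⟨2*(i0:ℕ)+1, by omega⟩ : BV r m l))) := by
        ext x
        simp only [Set.mem_diff, Set.mem_union, Set.mem_setOf_eq, Set.mem_range,
          Set.mem_insert_iff, not_or, not_exists]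
        constructor
        · rintro ⟨hx1 | ⟨k, hk, rfl⟩, hx2⟩
          · rcases hSshape _ hx1 with ⟨i, rfl⟩ | rfl
            · exact absurd rfl (hx2.1 i)
            · exact Or.inl rfl
          · right
            refine ⟨⟨(k:ℕ)/2, by omega⟩, ?_⟩
            have : 2*((k:ℕ)/2)+1 = (k:ℕ) := by omega
            congr 1
            exact Fin.ext (by simpa using this)
        · rintro (rfl | ⟨i0, rfl⟩)
          · exact ⟨Or.inl hv, fun i => by simp, fun s => by simp⟩
          · exact ⟨Or.inr ⟨⟨2*(i0:ℕ)+1, by omega⟩, (by omega : (2*(i0:ℕ)+1) % 2 = 1), rfl⟩,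
              fun i => by simp, fun s => by simp⟩
      rw [hset, Set.ncard_insert_of_notMem (by simp) (Set.toFinite _)]
      have hrg : (Set.range (fun i0 : Fin l =>
          (BV.w ⟨2*(i0:ℕ)+1, by omega⟩ : BV r m l))).ncard = l := by
        rw [← Nat.card_coe_set_eq, Nat.card_range_of_injective, Nat.card_eq_fintype_card,
          Fintype.card_fin]
        intro a b hab
        simp only [BV.w.injEq, Fin.mk.injEq] at hab
        exact Fin.ext (by omega)
      rw [hrg]
    · refine ⟨SimpleGraph.Coloring.mk (fun x => phiA r m l hr0 c cbar x.1) ?_,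
        fun s h => rfl, fun i hi h => rfl, fun hvv _ => absurd hv hvv⟩
      rintro ⟨x, hx⟩ ⟨y, hy⟩ hadj
      simp only [SimpleGraph.induce, SimpleGraph.comap_adj, Function.Embedding.coe_subtype,
        colorSetGadget, SimpleGraph.fromRel_adj] at hadj
      obtain ⟨hne, hrel | hrel⟩ := hadj
      · exact keyA r m l hr0 C cbar hmem S hv c hc hcC x y hx hy hne hrel
      · exact (keyA r m l hr0 C cbar hmem S hv c hc hcC y x hy hx (Ne.symm hne) hrel).symm
  · -- delete the even-indexed w's (including w (2l)); keep v
    refine ⟨S ∪ {z : BV r m l | ∃ k : Fin (2*l+1), (k:ℕ) % 2 = 0 ∧ z = BV.w k},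
      ?_, ?_, ?_, ?_⟩
    · ext x
      simp only [Set.mem_inter_iff, Set.mem_union, Set.mem_setOf_eq, Set.mem_singleton_iff,
        Set.mem_range]
      constructor
      · rintro ⟨hx1 | ⟨k, hk, rfl⟩, hx2⟩
        · exact hx1
        · rcases hx2 with ⟨i, hi⟩ | h <;> simp_all
      · intro hx
        refine ⟨Or.inl hx, ?_⟩
        rcases hSshape _ hx with ⟨i, rfl⟩ | rfl
        · exact Or.inl ⟨i, rfl⟩
        · exact Or.inr rfl
    · intro s hs
      simp only [Set.mem_union, Set.mem_setOf_eq] at hs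
      rcases hs with hs | ⟨k, _, hk⟩
      · exact hfS s hs
      · cases hk
    · have hset : (S ∪ {z : BV r m l | ∃ k : Fin (2*l+1), (k:ℕ) % 2 = 0 ∧ z = BV.w k}) \
          (Set.range (fun i : Fin m => (BV.u i : BV r m l)) ∪
            Set.range (fun s : Fin r => (BV.f s : BV r m l))) =
          Set.range (fun i0 : Fin (l+1) => (BV.w ⟨2*(i0:ℕ), by omega⟩ : BV r m l)) := by
        ext x
        simp only [Set.mem_diff, Set.mem_union, Set.mem_setOf_eq, Set.mem_range, not_or,
          not_exists]
        constructor
        · rintro ⟨hx1 | ⟨k, hk, rfl⟩, hx2⟩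
          · rcases hSshape _ hx1 with ⟨i, rfl⟩ | rfl
            · exact absurd rfl (hx2.1 i)
            · exact absurd hx1 hv
          · refine ⟨⟨(k:ℕ)/2, by omega⟩, ?_⟩
            have : 2*((k:ℕ)/2) = (k:ℕ) := by omega
            congr 1
            exact Fin.ext (by simpa using this)
        · rintro ⟨i0, rfl⟩
          exact ⟨Or.inr ⟨⟨2*(i0:ℕ), by omega⟩, (by omega : (2*(i0:ℕ)) % 2 = 0), rfl⟩,
            fun i => by simp, fun s => by simp⟩
      rw [hset]
      rw [← Nat.card_coe_set_eq, Nat.card_range_of_injective, Nat.card_eq_fintype_card,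
        Fintype.card_fin]
      intro a b hab
      simp only [BV.w.injEq, Fin.mk.injEq] at hab
      exact Fin.ext (by omega)
    · refine ⟨SimpleGraph.Coloring.mk (fun x => phiB r m l hr0 c cv x.1) ?_,
        fun s h => rfl, fun i hi h => rfl, fun _ _ => rfl⟩
      rintro ⟨x, hx⟩ ⟨y, hy⟩ hadj
      simp only [SimpleGraph.induce, SimpleGraph.comap_adj, Function.Embedding.coe_subtype,
        colorSetGadget, SimpleGraph.fromRel_adj] at hadj
      obtain ⟨hne, hrel | hrel⟩ := hadj
      · exact keyB r m l hr0 cbar S c cv hc x y hx hy hne hrel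
      · exact (keyB r m l hr0 cbar S c cv hc y x hy hx (Ne.symm hne) hrel).symm
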